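/- (Chernoff's Gaussian variance bounds.) Let N ~ N(μ, σ²) and let g : ℝ → ℝ be locally absolutely continuous with E[g(N)²] < ∞ and E[g'(N)²] < ∞. Then σ² (E[g'(N)])² ≤ Var[g(N)] ≤ σ² E[g'(N)²]. -/

import Mathlib

open MeasureTheory ProbabilityTheory Real Set Filter Topology
open scoped NNReal ENNReal

noncomputable section ChernoffAux

variable (m σ : ℝ)

/-- abbreviation for the pdf as a real function -/
def chPdf : ℝ → ℝ := gaussianPDFReal m (σ ^ 2).toNNReal

variable {σ}

lemma chV_coe (hσ : 0 < σ) : (((σ ^ 2).toNNReal : ℝ≥0) : ℝ) = σ ^ 2 :=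
  Real.coe_toNNReal _ (sq_nonneg σ)

lemma chV_ne (hσ : 0 < σ) : (σ ^ 2).toNNReal ≠ 0 := by
  simp only [ne_eq, Real.toNNReal_eq_zero, not_le]
  positivity

lemma chPdf_eq (hσ : 0 < σ) (x : ℝ) :
    chPdf m σ x = (Real.sqrt (2 * π * σ ^ 2))⁻¹ * Real.exp (-(x - m) ^ 2 / (2 * σ ^ 2)) := by
  rw [chPdf, gaussianPDFReal, chV_coe hσ]

lemma chPdf_pos (hσ : 0 < σ) (x : ℝ) : 0 < chPdf m σ x :=
  gaussianPDFReal_pos _ _ _ (chV_ne hσ)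

lemma chPdf_continuous (hσ : 0 < σ) : Continuous (chPdf m σ) := by
  have : chPdf m σ = fun x => (Real.sqrt (2 * π * σ ^ 2))⁻¹ *
      Real.exp (-(x - m) ^ 2 / (2 * σ ^ 2)) := funext fun x => chPdf_eq m hσ x
  rw [this]; fun_prop

lemma chPdf_hasDerivAt (hσ : 0 < σ) (x : ℝ) :
    HasDerivAt (fun y => -σ ^ 2 * chPdf m σ y) ((x - m) * chPdf m σ x) x := by
  have h2 : (0:ℝ) < 2 * σ ^ 2 := by positivity
  have hderiv : HasDerivAt (fun y : ℝ => -(y - m) ^ 2 / (2 * σ ^ 2))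
      (-(x - m) / σ ^ 2) x := by
    have h1 : HasDerivAt (fun y : ℝ => -(y - m) ^ 2) (-(2 * (x - m))) x := by
      have := ((hasDerivAt_id x).sub_const m).pow 2
      exact this.neg.congr_deriv (by simp)
    have := h1.div_const (2 * σ ^ 2)
    refine this.congr_deriv ?_
    field_simp
  have hexp := (hderiv.exp).const_mul ((Real.sqrt (2 * π * σ ^ 2))⁻¹)
  have hfull := hexp.const_mul (-σ ^ 2)
  have heq : (fun y => -σ ^ 2 * chPdf m σ y) =
      fun y => -σ ^ 2 * ((Real.sqrt (2 * π * σ ^ 2))⁻¹ * Real.exp (-(y - m) ^ 2 / (2 * σ ^ 2))) := by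
    funext y; rw [chPdf_eq m hσ]
  rw [heq]
  refine hfull.congr_deriv ?_
  rw [chPdf_eq m hσ]
  field_simp

lemma chPdf_tendsto_atTop (hσ : 0 < σ) : Tendsto (chPdf m σ) atTop (𝓝 0) := by
  have hsq : Tendsto (fun x : ℝ => (x - m) ^ 2) atTop atTop := by
    have h1 : Tendsto (fun x : ℝ => x - m) atTop atTop :=
      tendsto_atTop_add_const_right _ (-m) tendsto_id |>.congr (fun x => by simp [sub_eq_add_neg, add_comm])
    exact ((tendsto_pow_atTop (two_ne_zero)).comp h1).congr (fun x => rfl)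
  have h : Tendsto (fun x : ℝ => -(x - m) ^ 2 / (2 * σ ^ 2)) atTop atBot := by
    apply Tendsto.atBot_div_const (by positivity)
    exact tendsto_neg_atBot_iff.mpr hsq
  have := (Real.tendsto_exp_atBot.comp h).const_mul ((Real.sqrt (2 * π * σ ^ 2))⁻¹)
  simp only [mul_zero] at this
  exact this.congr fun x => (chPdf_eq m hσ x).symm

lemma chPdf_tendsto_atBot (hσ : 0 < σ) : Tendsto (chPdf m σ) atBot (𝓝 0) := by
  have hsq : Tendsto (fun x : ℝ => (x - m) ^ 2) atBot atTop := by
    have h1 : Tendsto (fun x : ℝ => m - x) atBot atTop := by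
      have := tendsto_atTop_add_const_left atBot m tendsto_neg_atBot_atTop
      exact this.congr (fun x => by ring)
    exact ((tendsto_pow_atTop (two_ne_zero)).comp h1).congr (fun x => by
      simp only [Function.comp_apply]; ring)
  have h : Tendsto (fun x : ℝ => -(x - m) ^ 2 / (2 * σ ^ 2)) atBot atBot := by
    apply Tendsto.atBot_div_const (by positivity)
    exact tendsto_neg_atBot_iff.mpr hsq
  have := (Real.tendsto_exp_atBot.comp h).const_mul ((Real.sqrt (2 * π * σ ^ 2))⁻¹)
  simp only [mul_zero] at this
  exact this.congr fun x => (chPdf_eq m hσ x).symm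


lemma ch_integrable_sq_exp {b : ℝ} (hb : 0 < b) :
    Integrable (fun x : ℝ => x ^ 2 * Real.exp (-b * x ^ 2)) := by
  have hbound : ∀ x : ℝ, ‖x ^ 2 * Real.exp (-b * x ^ 2)‖ ≤ (2 / b) * Real.exp (-(b / 2) * x ^ 2) := by
    intro x
    have h1 : x ^ 2 ≤ (2 / b) * Real.exp ((b / 2) * x ^ 2) := by
      have h2 : (b / 2) * x ^ 2 ≤ Real.exp ((b / 2) * x ^ 2) := (Real.add_one_le_exp _).trans'
        (by nlinarith [Real.exp_pos ((b / 2) * x ^ 2)]) |>.trans (le_refl _)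
      calc x ^ 2 = (2 / b) * ((b / 2) * x ^ 2) := by field_simp
        _ ≤ (2 / b) * Real.exp ((b / 2) * x ^ 2) := by
            apply mul_le_mul_of_nonneg_left h2 (by positivity)
    rw [Real.norm_eq_abs, abs_of_nonneg (by positivity)]
    calc x ^ 2 * Real.exp (-b * x ^ 2)
        ≤ ((2 / b) * Real.exp ((b / 2) * x ^ 2)) * Real.exp (-b * x ^ 2) :=
          mul_le_mul_of_nonneg_right h1 (Real.exp_pos _).le
      _ = (2 / b) * Real.exp (-(b / 2) * x ^ 2) := by
          rw [mul_assoc, ← Real.exp_add]; ring_nf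
  have hint : Integrable (fun x : ℝ => (2 / b) * Real.exp (-(b / 2) * x ^ 2)) :=
    (integrable_exp_neg_mul_sq (by positivity)).const_mul _
  exact hint.mono' (Continuous.aestronglyMeasurable (by fun_prop)) (Filter.Eventually.of_forall hbound)

lemma ch_integrable_sq_pdf (hσ : 0 < σ) :
    Integrable (fun x => (x - m) ^ 2 * chPdf m σ x) := by
  have hb : (0:ℝ) < 1 / (2 * σ ^ 2) := by positivity
  have h0 : Integrable (fun x : ℝ => x ^ 2 * Real.exp (-(1 / (2 * σ ^ 2)) * x ^ 2)) :=
    ch_integrable_sq_exp hb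
  have h1 : Integrable (fun x : ℝ => (x - m) ^ 2 * Real.exp (-(1 / (2 * σ ^ 2)) * (x - m) ^ 2)) :=
    ((measurePreserving_sub_right volume m).integrable_comp h0.aestronglyMeasurable).mpr h0
  have h2 := h1.const_mul ((Real.sqrt (2 * π * σ ^ 2))⁻¹)
  apply h2.congr
  apply Filter.Eventually.of_forall
  intro x
  simp only [chPdf_eq m hσ]
  ring

lemma ch_integrable_abs_pdf (hσ : 0 < σ) :
    Integrable (fun x => |x - m| * chPdf m σ x) := by
  have h1 := (ch_integrable_sq_pdf m hσ).add (integrable_gaussianPDFReal m (σ ^ 2).toNNReal)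
  refine h1.mono' ?_ ?_
  · exact Continuous.aestronglyMeasurable
      ((continuous_abs.comp (continuous_id.sub continuous_const)).mul (chPdf_continuous m hσ))
  apply Filter.Eventually.of_forall
  intro x
  have hp := (chPdf_pos m hσ x).le
  rw [Real.norm_eq_abs, abs_of_nonneg (mul_nonneg (abs_nonneg _) hp)]
  have : |x - m| ≤ (x - m) ^ 2 + 1 := by nlinarith [abs_nonneg (x - m), sq_abs (x - m)]
  calc |x - m| * chPdf m σ x ≤ ((x - m) ^ 2 + 1) * chPdf m σ x :=
        mul_le_mul_of_nonneg_right this hp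
    _ = (x - m) ^ 2 * chPdf m σ x + chPdf m σ x := by ring
    _ = _ := rfl

lemma ch_integrable_lin_pdf (hσ : 0 < σ) :
    Integrable (fun x => (x - m) * chPdf m σ x) := by
  refine (ch_integrable_abs_pdf m hσ).mono' ?_ ?_
  · exact Continuous.aestronglyMeasurable
      (((continuous_id.sub continuous_const)).mul (chPdf_continuous m hσ))
  apply Filter.Eventually.of_forall
  intro x
  rw [Real.norm_eq_abs, abs_mul, abs_of_nonneg (chPdf_pos m hσ x).le]

/-- Gaussian tail identity: `∫_{x > s} (x - m) φ(x) dx = σ² φ(s)`. -/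
lemma ch_tail (hσ : 0 < σ) (s : ℝ) :
    ∫ x in Ioi s, (x - m) * chPdf m σ x = σ ^ 2 * chPdf m σ s := by
  have := integral_Ioi_of_hasDerivAt_of_tendsto' (a := s)
    (f := fun y => -σ ^ 2 * chPdf m σ y) (f' := fun x => (x - m) * chPdf m σ x)
    (fun x _ => chPdf_hasDerivAt m hσ x)
    ((ch_integrable_lin_pdf m hσ).integrableOn)
    (by simpa using (chPdf_tendsto_atTop m hσ).const_mul (-σ ^ 2))
  rw [this]; ring

lemma ch_first_moment_pdf (hσ : 0 < σ) : ∫ x, (x - m) * chPdf m σ x = 0 := by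
  have := integral_of_hasDerivAt_of_tendsto
    (f := fun y => -σ ^ 2 * chPdf m σ y) (f' := fun x => (x - m) * chPdf m σ x)
    (fun x => chPdf_hasDerivAt m hσ x)
    (ch_integrable_lin_pdf m hσ)
    (by simpa using (chPdf_tendsto_atBot m hσ).const_mul (-σ ^ 2))
    (by simpa using (chPdf_tendsto_atTop m hσ).const_mul (-σ ^ 2))
  rw [this]; ring


lemma ch_measure (hσ : 0 < σ) : gaussianReal m (σ ^ 2).toNNReal
    = volume.withDensity (fun x => ENNReal.ofReal (chPdf m σ x)) := by
  rw [gaussianReal_of_var_ne_zero m (chV_ne hσ)]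
  rfl

lemma ch_integral (hσ : 0 < σ) (f : ℝ → ℝ) :
    ∫ x, f x ∂(gaussianReal m (σ ^ 2).toNNReal) = ∫ x, f x * chPdf m σ x := by
  rw [ch_measure m hσ]
  have hd : (fun x => ENNReal.ofReal (chPdf m σ x))
      = (fun x => ((fun y => (chPdf m σ y).toNNReal) x : ℝ≥0∞)) := rfl
  rw [hd, integral_withDensity_eq_integral_smul
    ((chPdf_continuous m hσ).measurable.real_toNNReal)]
  congr 1
  funext x
  rw [NNReal.smul_def, smul_eq_mul, Real.coe_toNNReal _ (chPdf_pos m hσ x).le, mul_comm]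

lemma ch_integrable_iff (hσ : 0 < σ) (f : ℝ → ℝ) :
    Integrable f (gaussianReal m (σ ^ 2).toNNReal)
      ↔ Integrable (fun x => f x * chPdf m σ x) volume := by
  rw [ch_measure m hσ, integrable_withDensity_iff
    ((chPdf_continuous m hσ).measurable.ennreal_ofReal)
    (Filter.Eventually.of_forall fun x => ENNReal.ofReal_lt_top)]
  refine integrable_congr (Filter.Eventually.of_forall fun x => ?_)
  simp [ENNReal.toReal_ofReal (chPdf_pos m hσ x).le]

lemma ch_setIntegral (hσ : 0 < σ) (f : ℝ → ℝ) {A : Set ℝ} (hA : MeasurableSet A) :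
    ∫ x in A, f x ∂(gaussianReal m (σ ^ 2).toNNReal) = ∫ x in A, f x * chPdf m σ x := by
  rw [ch_measure m hσ, restrict_withDensity hA]
  have hd : (fun x => ENNReal.ofReal (chPdf m σ x))
      = (fun x => ((fun y => (chPdf m σ y).toNNReal) x : ℝ≥0∞)) := rfl
  rw [hd, integral_withDensity_eq_integral_smul
    ((chPdf_continuous m hσ).measurable.real_toNNReal)]
  congr 1
  funext x
  rw [NNReal.smul_def, smul_eq_mul, Real.coe_toNNReal _ (chPdf_pos m hσ x).le, mul_comm]

lemma ch_integrable_id (hσ : 0 < σ) :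
    Integrable (fun x => x) (gaussianReal m (σ ^ 2).toNNReal) := by
  rw [ch_integrable_iff m hσ]
  have h := (ch_integrable_lin_pdf m hσ).add
    ((integrable_gaussianPDFReal m (σ ^ 2).toNNReal).const_mul m)
  apply h.congr
  apply Filter.Eventually.of_forall
  intro x
  simp only [Pi.add_apply, chPdf]
  ring

lemma ch_integrable_sq (hσ : 0 < σ) :
    Integrable (fun x => x ^ 2) (gaussianReal m (σ ^ 2).toNNReal) := by
  rw [ch_integrable_iff m hσ]
  have h : Integrable (fun x => 2 * ((x - m) ^ 2 * chPdf m σ x) + 2 * m ^ 2 * chPdf m σ x)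
      volume := by
    exact ((ch_integrable_sq_pdf m hσ).const_mul 2).add
      ((integrable_gaussianPDFReal m (σ ^ 2).toNNReal).const_mul (2 * m ^ 2))
  refine h.mono' ?_ ?_
  · exact Continuous.aestronglyMeasurable
      ((continuous_pow 2).mul (chPdf_continuous m hσ))
  apply Filter.Eventually.of_forall
  intro x
  have hp := (chPdf_pos m hσ x).le
  rw [Real.norm_eq_abs, abs_of_nonneg (mul_nonneg (sq_nonneg _) hp)]
  nlinarith [mul_nonneg (sq_nonneg (x - 2 * m)) hp]

lemma ch_int_id (hσ : 0 < σ) : ∫ x, x ∂(gaussianReal m (σ ^ 2).toNNReal) = m := by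
  rw [ch_integral m hσ]
  have : (fun x => x * chPdf m σ x)
      = fun x => (x - m) * chPdf m σ x + m * chPdf m σ x := by funext x; ring
  have h2 : Integrable (fun x => m * chPdf m σ x) volume := by
    exact ((integrable_gaussianPDFReal m (σ ^ 2).toNNReal)).const_mul m
  rw [this, integral_add (ch_integrable_lin_pdf m hσ) h2,
    ch_first_moment_pdf m hσ, integral_const_mul]
  rw [show (fun x => chPdf m σ x) = gaussianPDFReal m (σ ^ 2).toNNReal from rfl]
  rw [integral_gaussianPDFReal_eq_one m (chV_ne hσ)]
  ring

lemma ch_tail_measure (hσ : 0 < σ) (s : ℝ) :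
    ∫ x in Ici s, (x - m) ∂(gaussianReal m (σ ^ 2).toNNReal) = σ ^ 2 * chPdf m σ s := by
  rw [ch_setIntegral m hσ _ measurableSet_Ici, integral_Ici_eq_integral_Ioi, ch_tail m hσ]


/-- The signed indicator kernel `1_{s ≤ x} - 1_{s ≤ y}`. -/
def chE (x y s : ℝ) : ℝ := (if s ≤ x then 1 else 0) - (if s ≤ y then 1 else 0)

lemma chE_mul_nonneg (x y s : ℝ) : 0 ≤ (x - y) * chE x y s := by
  rcases le_total y x with h | h
  · rcases le_or_gt s y with h1 | h1
    · simp [chE, h1, h1.trans h]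
    · rcases le_or_gt s x with h2 | h2
      · have : ¬ (s ≤ y) := not_le.mpr h1
        simp only [chE, if_pos h2, if_neg this]
        nlinarith
      · simp [chE, not_le.mpr h2, not_le.mpr h1]
  · rcases le_or_gt s x with h1 | h1
    · simp [chE, h1, h1.trans h]
    · rcases le_or_gt s y with h2 | h2
      · have : ¬ (s ≤ x) := not_le.mpr h1
        simp only [chE, if_pos h2, if_neg this]
        nlinarith
      · simp [chE, not_le.mpr h2, not_le.mpr h1]

lemma chE_measurable : Measurable (fun q : (ℝ × ℝ) × ℝ => chE q.1.1 q.1.2 q.2) := by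
  unfold chE
  apply Measurable.sub
  · exact Measurable.ite (measurableSet_le measurable_snd (measurable_fst.comp measurable_fst))
      measurable_const measurable_const
  · exact Measurable.ite (measurableSet_le measurable_snd (measurable_snd.comp measurable_fst))
      measurable_const measurable_const

lemma chE_indicator_le' {x y : ℝ} (h : y ≤ x) (k : ℝ → ℝ) (s : ℝ) :
    k s * chE x y s = (Ioc y x).indicator k s := by
  by_cases h1 : s ≤ y
  · simp [chE, h1, h1.trans h, Set.indicator_of_notMem (fun hc : s ∈ Ioc y x => absurd h1 (not_le.mpr hc.1))]
  · by_cases h2 : s ≤ x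
    · have hs : s ∈ Ioc y x := ⟨not_le.mp h1, h2⟩
      simp [chE, h1, h2, Set.indicator_of_mem hs]
    · have hs : s ∉ Ioc y x := fun hc => h2 (hc.2)
      simp [chE, h1, h2, Set.indicator_of_notMem hs]

lemma chE_neg (x y s : ℝ) : chE y x s = - chE x y s := by simp [chE]

/-- `∫ s, k s * chE x y s = ∫ t in y..x, k t` -/
lemma integral_mul_chE {k : ℝ → ℝ} (hk : ∀ a b : ℝ, IntervalIntegrable k volume a b)
    (x y : ℝ) : ∫ s, k s * chE x y s = ∫ t in y..x, k t := by
  rcases le_total y x with h | h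
  · have : (fun s => k s * chE x y s) = (Ioc y x).indicator k :=
      funext fun s => chE_indicator_le' h k s
    rw [this, integral_indicator measurableSet_Ioc,
      intervalIntegral.integral_of_le h]
  · have : (fun s => k s * chE x y s) = fun s => -((Ioc x y).indicator k s) := by
      funext s
      rw [← chE_indicator_le' h k s, chE_neg]
      ring
    rw [this, integral_neg, integral_indicator measurableSet_Ioc,
      ← intervalIntegral.integral_of_le h, ← intervalIntegral.integral_symm]

lemma integrable_mul_chE {k : ℝ → ℝ} (hk : ∀ a b : ℝ, IntervalIntegrable k volume a b)
    (x y : ℝ) : Integrable (fun s => k s * chE x y s) volume := by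
  rcases le_total y x with h | h
  · have : (fun s => k s * chE x y s) = (Ioc y x).indicator k :=
      funext fun s => chE_indicator_le' h k s
    rw [this]
    exact (integrable_indicator_iff measurableSet_Ioc).mpr
      ((intervalIntegrable_iff_integrableOn_Ioc_of_le h).mp (hk y x))
  · have : (fun s => k s * chE x y s) = fun s => -((Ioc x y).indicator k s) := by
      funext s
      rw [← chE_indicator_le' h k s, chE_neg]
      ring
    rw [this]
    exact ((integrable_indicator_iff measurableSet_Ioc).mpr
      ((intervalIntegrable_iff_integrableOn_Ioc_of_le h).mp (hk x y))).neg


lemma ch_indA_integrable (hσ : 0 < σ) (s : ℝ) :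
    Integrable (fun x => (x - m) * (if s ≤ x then (1:ℝ) else 0))
      (gaussianReal m (σ ^ 2).toNNReal) := by
  have he : (fun x => (x - m) * (if s ≤ x then (1:ℝ) else 0))
      = (Ici s).indicator (fun x => x - m) := by
    funext x
    by_cases h : s ≤ x
    · simp [h, Set.indicator_of_mem (mem_Ici.mpr h)]
    · simp [h, Set.indicator_of_notMem (fun hc => h (mem_Ici.mp hc))]
  rw [he]
  exact ((ch_integrable_id m hσ).sub (integrable_const m)).indicator measurableSet_Ici

lemma ch_indA_integral (hσ : 0 < σ) (s : ℝ) :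
    ∫ x, (x - m) * (if s ≤ x then (1:ℝ) else 0) ∂(gaussianReal m (σ ^ 2).toNNReal)
      = σ ^ 2 * chPdf m σ s := by
  have he : (fun x => (x - m) * (if s ≤ x then (1:ℝ) else 0))
      = (Ici s).indicator (fun x => x - m) := by
    funext x
    by_cases h : s ≤ x
    · simp [h, Set.indicator_of_mem (mem_Ici.mpr h)]
    · simp [h, Set.indicator_of_notMem (fun hc => h (mem_Ici.mp hc))]
  rw [he, integral_indicator measurableSet_Ici, ch_tail_measure m hσ]

lemma ch_centered (hσ : 0 < σ) :
    ∫ x, (x - m) ∂(gaussianReal m (σ ^ 2).toNNReal) = 0 := by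
  rw [integral_sub (ch_integrable_id m hσ) (integrable_const m), ch_int_id m hσ,
    integral_const]
  simp

lemma ch_w_integrable (hσ : 0 < σ) (s : ℝ) :
    Integrable (fun p : ℝ × ℝ => (p.1 - p.2) * chE p.1 p.2 s)
      ((gaussianReal m (σ ^ 2).toNNReal).prod (gaussianReal m (σ ^ 2).toNNReal)) := by
  set μ := gaussianReal m (σ ^ 2).toNNReal
  set A : ℝ → ℝ := fun x => if s ≤ x then (1:ℝ) else 0 with hA
  have hAi : Integrable A μ := by
    have : A = (Ici s).indicator (fun _ => (1:ℝ)) := by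
      funext x
      by_cases h : s ≤ x
      · simp [hA, h, Set.indicator_of_mem (mem_Ici.mpr h)]
      · simp [hA, h, Set.indicator_of_notMem (fun hc => h (mem_Ici.mp hc))]
    rw [this]
    exact (integrable_const (1:ℝ)).indicator measurableSet_Ici
  have hxm : Integrable (fun x => x - m) μ := (ch_integrable_id m hσ).sub (integrable_const m)
  have hfA : Integrable (fun x => (x - m) * A x) μ := ch_indA_integrable m hσ s
  have t1 := hfA.mul_prod (integrable_const (1:ℝ) : Integrable _ μ)
  have t2 := hxm.mul_prod hAi
  have t3 := hAi.mul_prod hxm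
  have t4 := (integrable_const (1:ℝ) : Integrable _ μ).mul_prod hfA
  have := ((t1.sub t2).sub t3).add t4
  apply this.congr
  apply Filter.Eventually.of_forall
  intro p
  simp only [Pi.add_apply, Pi.sub_apply, chE, hA]
  ring

lemma ch_w (hσ : 0 < σ) (s : ℝ) :
    ∫ p : ℝ × ℝ, (p.1 - p.2) * chE p.1 p.2 s
      ∂((gaussianReal m (σ ^ 2).toNNReal).prod (gaussianReal m (σ ^ 2).toNNReal))
      = 2 * σ ^ 2 * chPdf m σ s := by
  set μ := gaussianReal m (σ ^ 2).toNNReal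
  set A : ℝ → ℝ := fun x => if s ≤ x then (1:ℝ) else 0 with hA
  have hAi : Integrable A μ := by
    have : A = (Ici s).indicator (fun _ => (1:ℝ)) := by
      funext x
      by_cases h : s ≤ x
      · simp [hA, h, Set.indicator_of_mem (mem_Ici.mpr h)]
      · simp [hA, h, Set.indicator_of_notMem (fun hc => h (mem_Ici.mp hc))]
    rw [this]
    exact (integrable_const (1:ℝ)).indicator measurableSet_Ici
  have hxm : Integrable (fun x => x - m) μ := (ch_integrable_id m hσ).sub (integrable_const m)
  have hfA : Integrable (fun x => (x - m) * A x) μ := ch_indA_integrable m hσ s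
  have t1 := hfA.mul_prod (integrable_const (1:ℝ) : Integrable _ μ)
  have t2 := hxm.mul_prod hAi
  have t3 := hAi.mul_prod hxm
  have t4 := (integrable_const (1:ℝ) : Integrable _ μ).mul_prod hfA
  have hsplit : (fun p : ℝ × ℝ => (p.1 - p.2) * chE p.1 p.2 s)
      = fun p : ℝ × ℝ => (((p.1 - m) * A p.1) * 1 - (p.1 - m) * A p.2 - A p.1 * (p.2 - m))
        + 1 * ((p.2 - m) * A p.2) := by
    funext p
    simp only [chE, hA]
    ring
  rw [hsplit,
    integral_add
      (f := fun p : ℝ × ℝ => (p.1 - m) * A p.1 * 1 - (p.1 - m) * A p.2 - A p.1 * (p.2 - m))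
      (g := fun p : ℝ × ℝ => 1 * ((p.2 - m) * A p.2))
      (by exact (t1.sub t2).sub t3) (by exact t4),
    integral_sub
      (f := fun p : ℝ × ℝ => (p.1 - m) * A p.1 * 1 - (p.1 - m) * A p.2)
      (g := fun p : ℝ × ℝ => A p.1 * (p.2 - m))
      (by exact t1.sub t2) (by exact t3),
    integral_sub
      (f := fun p : ℝ × ℝ => (p.1 - m) * A p.1 * 1)
      (g := fun p : ℝ × ℝ => (p.1 - m) * A p.2)
      (by exact t1) (by exact t2)]
  rw [show (fun p : ℝ × ℝ => (p.1 - m) * A p.1 * 1) = fun p : ℝ × ℝ => ((p.1 - m) * A p.1) * 1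
      from rfl,
    show (fun p : ℝ × ℝ => 1 * ((p.2 - m) * A p.2)) = fun p : ℝ × ℝ => (1:ℝ) * ((p.2 - m) * A p.2)
      from rfl]
  rw [integral_prod_mul (fun x => (x - m) * A x) (fun _ => (1:ℝ)),
    integral_prod_mul (fun x => x - m) A,
    integral_prod_mul A (fun y => y - m),
    integral_prod_mul (fun _ => (1:ℝ)) (fun y => (y - m) * A y),
    ch_indA_integral m hσ s, ch_centered m hσ]
  simp only [integral_const, measure_univ, probReal_univ, ENNReal.toReal_one, smul_eq_mul, one_mul, mul_one]
  ring


/-- Master Fubini lemma: swap the Gaussian product integral with the kernel integral. -/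
lemma ch_master (hσ : 0 < σ) {k : ℝ → ℝ} (hkm : Measurable k)
    (hk : Integrable k (gaussianReal m (σ ^ 2).toNNReal)) :
    Integrable (fun p : ℝ × ℝ => ∫ s, k s * ((p.1 - p.2) * chE p.1 p.2 s))
        ((gaussianReal m (σ ^ 2).toNNReal).prod (gaussianReal m (σ ^ 2).toNNReal)) ∧
      ∫ p : ℝ × ℝ, (∫ s, k s * ((p.1 - p.2) * chE p.1 p.2 s))
          ∂((gaussianReal m (σ ^ 2).toNNReal).prod (gaussianReal m (σ ^ 2).toNNReal))
        = 2 * σ ^ 2 * ∫ x, k x ∂(gaussianReal m (σ ^ 2).toNNReal) := by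
  set μ := gaussianReal m (σ ^ 2).toNNReal with hμ
  set P := μ.prod μ with hP
  set Φ : (ℝ × ℝ) × ℝ → ℝ := fun q => k q.2 * ((q.1.1 - q.1.2) * chE q.1.1 q.1.2 q.2) with hΦ
  have hΦm : Measurable Φ := by
    apply (hkm.comp measurable_snd).mul
    exact ((measurable_fst.fst.sub measurable_fst.snd).mul chE_measurable)
  -- inner lintegral computation
  have key : ∀ s : ℝ, (∫⁻ p : ℝ × ℝ, ENNReal.ofReal ((p.1 - p.2) * chE p.1 p.2 s) ∂P)
      = ENNReal.ofReal (2 * σ ^ 2 * chPdf m σ s) := by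
    intro s
    rw [← ofReal_integral_eq_lintegral_ofReal (ch_w_integrable m hσ s)
      (Filter.Eventually.of_forall fun p => chE_mul_nonneg p.1 p.2 s), ch_w m hσ s]
  have hEm : ∀ s : ℝ, Measurable (fun p : ℝ × ℝ => ENNReal.ofReal ((p.1 - p.2) * chE p.1 p.2 s)) := by
    intro s
    apply Measurable.ennreal_ofReal
    exact (measurable_fst.sub measurable_snd).mul
      (chE_measurable.comp (measurable_id.prodMk measurable_const))
  -- finiteness of the total lintegral of ‖Φ‖
  have hkφ : Integrable (fun s => |k s| * (2 * σ ^ 2 * chPdf m σ s)) volume := by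
    have h1 : Integrable (fun s => k s * chPdf m σ s) volume := (ch_integrable_iff m hσ k).mp hk
    have h2 := (h1.abs.const_mul (2 * σ ^ 2))
    apply h2.congr
    apply Filter.Eventually.of_forall
    intro s
    show 2 * σ ^ 2 * |k s * chPdf m σ s| = |k s| * (2 * σ ^ 2 * chPdf m σ s)
    rw [abs_mul, abs_of_nonneg (chPdf_pos m hσ s).le]
    ring
  have hlin : (∫⁻ q : (ℝ × ℝ) × ℝ, ‖Φ q‖₊ ∂(P.prod volume)) < ⊤ := by
    have hswap : (∫⁻ q : (ℝ × ℝ) × ℝ, ‖Φ q‖₊ ∂(P.prod volume))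
        = ∫⁻ s : ℝ, ∫⁻ p : ℝ × ℝ, ‖Φ (p, s)‖₊ ∂P ∂volume := by
      exact lintegral_prod_symm _ (hΦm.enorm.aemeasurable)
    rw [hswap]
    have hinner : ∀ s : ℝ, (∫⁻ p : ℝ × ℝ, ‖Φ (p, s)‖₊ ∂P)
        = ENNReal.ofReal (|k s| * (2 * σ ^ 2 * chPdf m σ s)) := by
      intro s
      have h1 : ∀ p : ℝ × ℝ, (‖Φ (p, s)‖₊ : ℝ≥0∞)
          = ENNReal.ofReal (|k s|) * ENNReal.ofReal ((p.1 - p.2) * chE p.1 p.2 s) := by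
        intro p
        show (‖k s * ((p.1 - p.2) * chE p.1 p.2 s)‖₊ : ℝ≥0∞) = _
        rw [← enorm_eq_nnnorm, ← ofReal_norm, Real.norm_eq_abs, abs_mul,
          abs_of_nonneg (chE_mul_nonneg p.1 p.2 s), ENNReal.ofReal_mul (abs_nonneg _)]
      simp_rw [h1]
      rw [lintegral_const_mul _ (hEm s), key s, ← ENNReal.ofReal_mul (abs_nonneg _)]
    simp_rw [hinner]
    rw [← ofReal_integral_eq_lintegral_ofReal hkφ
      (Filter.Eventually.of_forall fun s => mul_nonneg (abs_nonneg _)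
        (mul_nonneg (by positivity) (chPdf_pos m hσ s).le))]
    exact ENNReal.ofReal_lt_top
  have hΦint : Integrable Φ (P.prod volume) :=
    ⟨hΦm.aestronglyMeasurable, hlin⟩
  constructor
  · exact hΦint.integral_prod_left
  · have hswap := integral_integral_swap (f := fun (p : ℝ × ℝ) (s : ℝ) => Φ (p, s))
      (μ := P) (ν := volume) (by exact hΦint)
    rw [hΦ] at hswap
    simp only at hswap
    rw [hswap]
    have hins : ∀ s : ℝ, ∫ p : ℝ × ℝ, k s * ((p.1 - p.2) * chE p.1 p.2 s) ∂P
        = k s * (2 * σ ^ 2 * chPdf m σ s) := by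
      intro s
      rw [integral_const_mul, ch_w m hσ s]
    simp_rw [hins]
    have : ∫ s : ℝ, k s * (2 * σ ^ 2 * chPdf m σ s)
        = 2 * σ ^ 2 * ∫ s : ℝ, k s * chPdf m σ s := by
      rw [← integral_const_mul]
      congr 1
      funext s
      ring
    rw [this, ← ch_integral m hσ k]


/-- second-moment bound for a probability measure -/
lemma ch_varnonneg {ν : Measure ℝ} [IsProbabilityMeasure ν] {u : ℝ → ℝ}
    (h1 : Integrable u ν) (h2 : Integrable (fun x => u x ^ 2) ν) :
    (∫ x, u x ∂ν) ^ 2 ≤ ∫ x, u x ^ 2 ∂ν := by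
  set c := ∫ x, u x ∂ν with hc
  have hexp : (fun x => (u x - c) ^ 2) = fun x => u x ^ 2 - 2 * c * u x + c ^ 2 := by
    funext x; ring
  have hint : Integrable (fun x => u x ^ 2 - 2 * c * u x + c ^ 2) ν :=
    (h2.sub (h1.const_mul (2 * c))).add (integrable_const _)
  have h0 : 0 ≤ ∫ x, (u x - c) ^ 2 ∂ν :=
    integral_nonneg fun x => sq_nonneg _
  rw [hexp, integral_add
      (f := fun x => u x ^ 2 - 2 * c * u x) (g := fun _ => c ^ 2)
      (by exact h2.sub (h1.const_mul (2 * c))) (integrable_const _),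
    integral_sub
      (f := fun x => u x ^ 2) (g := fun x => 2 * c * u x)
      h2 (by exact h1.const_mul (2 * c)), integral_const_mul, integral_const] at h0
  simp only [measure_univ, probReal_univ, ENNReal.toReal_one, smul_eq_mul, one_mul, ← hc] at h0
  nlinarith [h0]

/-- expansion of the symmetrized product over a product probability measure -/
lemma ch_expand {ν : Measure ℝ} [IsProbabilityMeasure ν] {f h : ℝ → ℝ}
    (hf : Integrable f ν) (hh : Integrable h ν)
    (hfh : Integrable (fun x => f x * h x) ν) :
    Integrable (fun p : ℝ × ℝ => (f p.1 - f p.2) * (h p.1 - h p.2)) (ν.prod ν) ∧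
    ∫ p : ℝ × ℝ, (f p.1 - f p.2) * (h p.1 - h p.2) ∂(ν.prod ν)
      = 2 * ((∫ x, f x * h x ∂ν) - (∫ x, f x ∂ν) * (∫ x, h x ∂ν)) := by
  have t1 := hfh.mul_prod (integrable_const (1:ℝ) : Integrable _ ν)
  have t2 := hf.mul_prod hh
  have t3 := hh.mul_prod hf
  have t4 := (integrable_const (1:ℝ) : Integrable _ ν).mul_prod hfh
  have hsplit : (fun p : ℝ × ℝ => (f p.1 - f p.2) * (h p.1 - h p.2))
      = fun p : ℝ × ℝ => ((f p.1 * h p.1) * 1 - f p.1 * h p.2 - h p.1 * f p.2)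
        + 1 * (f p.2 * h p.2) := by
    funext p; ring
  constructor
  · rw [hsplit]
    exact ((t1.sub t2).sub t3).add t4
  rw [hsplit,
    integral_add
      (f := fun p : ℝ × ℝ => (f p.1 * h p.1) * 1 - f p.1 * h p.2 - h p.1 * f p.2)
      (g := fun p : ℝ × ℝ => 1 * (f p.2 * h p.2))
      (by exact (t1.sub t2).sub t3) (by exact t4),
    integral_sub
      (f := fun p : ℝ × ℝ => (f p.1 * h p.1) * 1 - f p.1 * h p.2)
      (g := fun p : ℝ × ℝ => h p.1 * f p.2)
      (by exact t1.sub t2) (by exact t3),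
    integral_sub
      (f := fun p : ℝ × ℝ => (f p.1 * h p.1) * 1)
      (g := fun p : ℝ × ℝ => f p.1 * h p.2)
      (by exact t1) (by exact t2)]
  rw [integral_prod_mul (fun x => f x * h x) (fun _ => (1:ℝ)),
    integral_prod_mul f h, integral_prod_mul h f,
    integral_prod_mul (fun _ => (1:ℝ)) (fun x => f x * h x)]
  simp only [integral_const, measure_univ, probReal_univ, ENNReal.toReal_one, smul_eq_mul, one_mul, mul_one]
  ring

/-- local integrability of a function square-integrable against the Gaussian -/
lemma ch_sq_locint (hσ : 0 < σ) {f : ℝ → ℝ} (hfm : Measurable f)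
    (hf2 : Integrable (fun x => f x ^ 2) (gaussianReal m (σ ^ 2).toNNReal)) (a b : ℝ) :
    IntegrableOn (fun s => f s ^ 2) (Ioc a b) volume := by
  rcases le_or_gt b a with hab | hab
  · rw [Ioc_eq_empty (not_lt.mpr hab)]
    exact integrableOn_empty
  have hglob : Integrable (fun x => f x ^ 2 * chPdf m σ x) volume :=
    (ch_integrable_iff m hσ _).mp hf2
  obtain ⟨c, hc, hmin⟩ := (isCompact_Icc (a := a) (b := b)).exists_isMinOn
    (nonempty_Icc.mpr hab.le) ((chPdf_continuous m hσ).continuousOn)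
  set ε := chPdf m σ c with hε
  have hε0 : 0 < ε := chPdf_pos m hσ c
  have hbound : ∀ s ∈ Ioc a b, ‖f s ^ 2‖ ≤ ε⁻¹ * (f s ^ 2 * chPdf m σ s) := by
    intro s hs
    have hφs : ε ≤ chPdf m σ s := hmin (Ioc_subset_Icc_self hs)
    rw [Real.norm_eq_abs, abs_of_nonneg (sq_nonneg _)]
    have h1 : f s ^ 2 * ε ≤ f s ^ 2 * chPdf m σ s :=
      mul_le_mul_of_nonneg_left hφs (sq_nonneg _)
    calc f s ^ 2 = ε⁻¹ * (f s ^ 2 * ε) := by field_simp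
      _ ≤ ε⁻¹ * (f s ^ 2 * chPdf m σ s) := by
          exact mul_le_mul_of_nonneg_left h1 (by positivity)
  refine Integrable.mono' ((hglob.const_mul ε⁻¹).integrableOn) ?_ ?_
  · exact ((hfm.pow_const 2).aestronglyMeasurable).restrict
  · rw [ae_restrict_iff' measurableSet_Ioc]
    exact Filter.Eventually.of_forall hbound

/-- Cauchy-Schwarz on an interval -/
lemma ch_CS {a b : ℝ} (hab : a ≤ b) {f : ℝ → ℝ}
    (h1 : IntegrableOn f (Ioc a b) volume)
    (h2 : IntegrableOn (fun s => f s ^ 2) (Ioc a b) volume) :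
    (∫ s in Ioc a b, f s) ^ 2 ≤ (b - a) * ∫ s in Ioc a b, f s ^ 2 := by
  rcases eq_or_lt_of_le hab with rfl | hab'
  · simp
  set c := ∫ s in Ioc a b, f s with hc
  have hT : (volume (Ioc a b)).toReal = b - a := by
    rw [Real.volume_Ioc, ENNReal.toReal_ofReal (by linarith)]
  have h0 : 0 ≤ ∫ s in Ioc a b, ((b - a) * f s - c) ^ 2 :=
    integral_nonneg fun s => sq_nonneg _
  have hexp : (fun s => ((b - a) * f s - c) ^ 2)
      = fun s => (b - a) ^ 2 * f s ^ 2 - 2 * (b - a) * c * f s + c ^ 2 := by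
    funext s; ring
  rw [hexp, integral_add
      (f := fun s => (b - a) ^ 2 * f s ^ 2 - 2 * (b - a) * c * f s) (g := fun _ => c ^ 2)
      (by exact (h2.const_mul _).sub (h1.const_mul _)) (integrable_const _),
    integral_sub
      (f := fun s => (b - a) ^ 2 * f s ^ 2) (g := fun s => 2 * (b - a) * c * f s)
      (by exact h2.const_mul _) (by exact h1.const_mul _),
    integral_const_mul, integral_const_mul, integral_const] at h0
  rw [measureReal_restrict_apply_univ, measureReal_def, hT] at h0
  simp only [smul_eq_mul, ← hc] at h0
  nlinarith [h0, sq_nonneg c]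


lemma ch_pointwise (hσ : 0 < σ) {g g' : ℝ → ℝ} (hg'm : Measurable g')
    (hAC : ∀ x y : ℝ, IntervalIntegrable g' MeasureTheory.volume x y ∧
      g y - g x = ∫ t in x..y, g' t)
    (hg'2 : Integrable (fun x => g' x ^ 2) (gaussianReal m (σ ^ 2).toNNReal)) (x y : ℝ) :
    (g x - g y) * (g x - g y) ≤ ∫ s, g' s ^ 2 * ((x - y) * chE x y s) := by
  have hloc : ∀ a b : ℝ, IntegrableOn (fun s => g' s ^ 2) (Ioc a b) volume :=
    ch_sq_locint m hσ hg'm hg'2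
  have hII : ∀ a b : ℝ, IntervalIntegrable (fun s => g' s ^ 2) volume a b := by
    intro a b
    rw [intervalIntegrable_iff]
    exact hloc (a ⊓ b) (a ⊔ b)
  have hRHS : ∫ s, g' s ^ 2 * ((x - y) * chE x y s) = (x - y) * ∫ t in y..x, g' t ^ 2 := by
    rw [← integral_mul_chE hII x y, ← integral_const_mul]
    congr 1; funext s; ring
  rw [hRHS, ← sq]
  have hgg : g x - g y = ∫ t in y..x, g' t := (hAC y x).2
  rcases le_total y x with h | h
  · rw [hgg, intervalIntegral.integral_of_le h, intervalIntegral.integral_of_le h]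
    have := ch_CS h ((intervalIntegrable_iff_integrableOn_Ioc_of_le h).mp (hAC y x).1) (hloc y x)
    linarith [this]
  · rw [hgg, intervalIntegral.integral_of_ge h, intervalIntegral.integral_of_ge h]
    have := ch_CS h ((intervalIntegrable_iff_integrableOn_Ioc_of_le h).mp (hAC x y).1) (hloc x y)
    rw [neg_sq]
    nlinarith [this]

lemma ch_ftc_rep {g g' : ℝ → ℝ}
    (hAC : ∀ x y : ℝ, IntervalIntegrable g' MeasureTheory.volume x y ∧
      g y - g x = ∫ t in x..y, g' t) (x y : ℝ) :
    (g x - g y) * (x - y) = ∫ s, g' s * ((x - y) * chE x y s) := by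
  have h1 : g x - g y = ∫ s, g' s * chE x y s := by
    rw [integral_mul_chE (fun a b => (hAC a b).1) x y]
    exact (hAC y x).2
  calc (g x - g y) * (x - y) = (x - y) * ∫ s, g' s * chE x y s := by rw [h1]; ring
    _ = ∫ s, (x - y) * (g' s * chE x y s) := (integral_const_mul _ _).symm
    _ = ∫ s, g' s * ((x - y) * chE x y s) := by congr 1; funext s; ring

lemma ch_id_rep (x y : ℝ) :
    (x - y) * (x - y) = ∫ s, (1:ℝ) * ((x - y) * chE x y s) := by
  have h1 : ∫ s, (1:ℝ) * chE x y s = x - y := by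
    rw [integral_mul_chE (fun a b => intervalIntegrable_const) x y]
    simp
  calc (x - y) * (x - y) = (x - y) * ∫ s, (1:ℝ) * chE x y s := by rw [h1]
    _ = ∫ s, (x - y) * (1 * chE x y s) := (integral_const_mul _ _).symm
    _ = ∫ s, (1:ℝ) * ((x - y) * chE x y s) := by congr 1; funext s; ring

end ChernoffAux

/-- `g` is locally absolutely continuous with a.e. derivative `g'`,
expressed through the fundamental theorem of calculus. -/
def HasAEDeriv (g g' : ℝ → ℝ) : Prop :=
  ∀ x y : ℝ, IntervalIntegrable g' MeasureTheory.volume x y ∧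
    g y - g x = ∫ t in x..y, g' t

/-- Chernoff's Gaussian variance bounds: for `N ~ N(m, σ²)` and `g` locally
absolutely continuous with `E[g(N)²] < ∞` and `E[g'(N)²] < ∞`,
`σ² (E[g'(N)])² ≤ Var[g(N)] ≤ σ² E[g'(N)²]`. -/
theorem chernoff_gaussian_bounds (m σ : ℝ) (hσ : 0 < σ)
    (g g' : ℝ → ℝ) (hgmeas : Measurable g) (hg'meas : Measurable g')
    (hAC : HasAEDeriv g g')
    (hg2 : Integrable (fun x => g x ^ 2) (gaussianReal m ((σ ^ 2).toNNReal)))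
    (hg'2 : Integrable (fun x => g' x ^ 2) (gaussianReal m ((σ ^ 2).toNNReal))) :
    σ ^ 2 * (∫ x, g' x ∂(gaussianReal m ((σ ^ 2).toNNReal))) ^ 2 ≤
        (∫ x, g x ^ 2 ∂(gaussianReal m ((σ ^ 2).toNNReal))) -
          (∫ x, g x ∂(gaussianReal m ((σ ^ 2).toNNReal))) ^ 2 ∧
      (∫ x, g x ^ 2 ∂(gaussianReal m ((σ ^ 2).toNNReal))) -
          (∫ x, g x ∂(gaussianReal m ((σ ^ 2).toNNReal))) ^ 2 ≤
        σ ^ 2 * ∫ x, g' x ^ 2 ∂(gaussianReal m ((σ ^ 2).toNNReal)) := by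
  have hAC' : ∀ x y : ℝ, IntervalIntegrable g' MeasureTheory.volume x y ∧
      g y - g x = ∫ t in x..y, g' t := hAC
  set μ := gaussianReal m ((σ ^ 2).toNNReal) with hμdef
  -- basic integrabilities
  have habs_bound : ∀ (f : ℝ → ℝ), Measurable f → Integrable (fun x => f x ^ 2) μ →
      Integrable f μ := by
    intro f hfm hf2
    have h := (integrable_const (1:ℝ) : Integrable _ μ).add hf2
    refine h.mono' hfm.aestronglyMeasurable ?_
    refine Filter.Eventually.of_forall fun x => ?_
    rw [Real.norm_eq_abs]
    simp only [Pi.add_apply]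
    nlinarith [sq_nonneg (|f x| - 1), sq_abs (f x), abs_nonneg (f x)]
  have hgint : Integrable g μ := habs_bound g hgmeas hg2
  have hg'int : Integrable g' μ := habs_bound g' hg'meas hg'2
  have hxx : Integrable (fun x : ℝ => x * x) μ := by
    have := ch_integrable_sq m hσ
    exact this.congr (Filter.Eventually.of_forall fun x => by ring)
  have hgg : Integrable (fun x => g x * g x) μ :=
    hg2.congr (Filter.Eventually.of_forall fun x => by ring)
  have hgid : Integrable (fun x => g x * x) μ := by
    have h := ((ch_integrable_sq m hσ).add hg2).const_mul (1/2)
    refine h.mono' (hgmeas.mul measurable_id).aestronglyMeasurable ?_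
    refine Filter.Eventually.of_forall fun x => ?_
    rw [Real.norm_eq_abs, abs_mul]
    simp only [Pi.add_apply]
    nlinarith [sq_nonneg (|g x| - |x|), sq_abs (g x), sq_abs x,
      abs_nonneg (g x), abs_nonneg x]
  -- second moment of the Gaussian
  have e3 := ch_expand (ν := μ) (ch_integrable_id m hσ) (ch_integrable_id m hσ) hxx
  have master0 := ch_master m hσ (k := fun _ => (1:ℝ)) measurable_const
    (integrable_const 1)
  have hrep0 : (fun p : ℝ × ℝ => (p.1 - p.2) * (p.1 - p.2))
      = fun p : ℝ × ℝ => ∫ s, (1:ℝ) * ((p.1 - p.2) * chE p.1 p.2 s) :=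
    funext fun p => ch_id_rep p.1 p.2
  have hS : ∫ x, x * x ∂μ = σ ^ 2 + m * m := by
    have h1 : ∫ p : ℝ × ℝ, (p.1 - p.2) * (p.1 - p.2) ∂(μ.prod μ)
        = 2 * ((∫ x, x * x ∂μ) - (∫ x, x ∂μ) * (∫ x, x ∂μ)) := e3.2
    have h2 : ∫ p : ℝ × ℝ, (p.1 - p.2) * (p.1 - p.2) ∂(μ.prod μ)
        = 2 * σ ^ 2 * ∫ x, (1:ℝ) ∂μ := by rw [hrep0]; exact master0.2
    rw [ch_int_id m hσ] at h1
    rw [integral_const] at h2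
    simp only [measure_univ, probReal_univ, ENNReal.toReal_one, smul_eq_mul, mul_one] at h2
    linarith
  -- Stein's identity
  have e2 := ch_expand (ν := μ) hgint (ch_integrable_id m hσ) hgid
  have master1 := ch_master m hσ hg'meas hg'int
  have hrep1 : (fun p : ℝ × ℝ => (g p.1 - g p.2) * (p.1 - p.2))
      = fun p : ℝ × ℝ => ∫ s, g' s * ((p.1 - p.2) * chE p.1 p.2 s) :=
    funext fun p => ch_ftc_rep hAC' p.1 p.2
  have hstein : (∫ x, g x * x ∂μ) - (∫ x, g x ∂μ) * m = σ ^ 2 * ∫ x, g' x ∂μ := by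
    have h1 : ∫ p : ℝ × ℝ, (g p.1 - g p.2) * (p.1 - p.2) ∂(μ.prod μ)
        = 2 * ((∫ x, g x * x ∂μ) - (∫ x, g x ∂μ) * (∫ x, x ∂μ)) := e2.2
    have h2 : ∫ p : ℝ × ℝ, (g p.1 - g p.2) * (p.1 - p.2) ∂(μ.prod μ)
        = 2 * σ ^ 2 * ∫ x, g' x ∂μ := by rw [hrep1]; exact master1.2
    rw [ch_int_id m hσ] at h1
    linarith
  -- upper bound
  have e1 := ch_expand (ν := μ) hgint hgint hgg
  have master2 := ch_master m hσ (k := fun x => g' x ^ 2) (hg'meas.pow_const 2) hg'2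
  have hsqg : ∫ x, g x * g x ∂μ = ∫ x, g x ^ 2 ∂μ :=
    integral_congr_ae (Filter.Eventually.of_forall fun x => by ring)
  have hub : (∫ x, g x ^ 2 ∂μ) - (∫ x, g x ∂μ) ^ 2 ≤ σ ^ 2 * ∫ x, g' x ^ 2 ∂μ := by
    have hmono := integral_mono e1.1 master2.1
      (fun p => ch_pointwise m hσ hg'meas hAC' hg'2 p.1 p.2)
    have h1 : ∫ p : ℝ × ℝ, (g p.1 - g p.2) * (g p.1 - g p.2) ∂(μ.prod μ)
        = 2 * ((∫ x, g x * g x ∂μ) - (∫ x, g x ∂μ) * (∫ x, g x ∂μ)) := e1.2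
    have h2 := master2.2
    rw [hsqg] at h1
    nlinarith [hmono, h1, h2, sq_nonneg (∫ x, g x ∂μ)]
  -- lower bound
  set I1 := ∫ x, g x ∂μ with hI1
  set I2 := ∫ x, g x ^ 2 ∂μ with hI2
  set D := ∫ x, g' x ∂μ with hD
  set J := ∫ x, g x * x ∂μ with hJ
  have hu : Integrable (fun x => g x - D * x) μ :=
    hgint.sub ((ch_integrable_id m hσ).const_mul D)
  have hu2 : Integrable (fun x => (g x - D * x) ^ 2) μ := by
    have h : Integrable (fun x => g x ^ 2 - 2 * D * (g x * x) + D ^ 2 * (x * x)) μ := by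
      exact (hg2.sub (hgid.const_mul (2 * D))).add (hxx.const_mul (D ^ 2))
    exact h.congr (Filter.Eventually.of_forall fun x => by ring)
  have hvn := ch_varnonneg hu hu2
  have hiu : ∫ x, (g x - D * x) ∂μ = I1 - D * m := by
    rw [integral_sub hgint ((ch_integrable_id m hσ).const_mul D), integral_const_mul,
      ch_int_id m hσ]
  have hiu2 : ∫ x, (g x - D * x) ^ 2 ∂μ = I2 - 2 * D * J + D ^ 2 * (σ ^ 2 + m * m) := by
    have hexp : (fun x => (g x - D * x) ^ 2)
        = fun x => (g x ^ 2 - 2 * D * (g x * x)) + D ^ 2 * (x * x) := by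
      funext x; ring
    rw [hexp, integral_add
        (f := fun x => g x ^ 2 - 2 * D * (g x * x)) (g := fun x => D ^ 2 * (x * x))
        (by exact hg2.sub (hgid.const_mul (2 * D))) (by exact hxx.const_mul (D ^ 2)),
      integral_sub (f := fun x => g x ^ 2) (g := fun x => 2 * D * (g x * x))
        hg2 (by exact hgid.const_mul (2 * D)),
      integral_const_mul, integral_const_mul, hS]
  rw [hiu] at hvn
  rw [hiu2] at hvn
  have hJval : J = σ ^ 2 * D + I1 * m := by linarith [hstein]
  have h2DJ : 2 * D * J = 2 * D * (σ ^ 2 * D) + 2 * D * (I1 * m) := by rw [hJval]; ring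
  constructor
  · nlinarith [hvn, h2DJ]
  · exact hub
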